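/- Let u: A → B and v: B → C be continuous linear maps between Fréchet spaces with v∘u = 0. If the image of v is closed in C, then the image of the transpose v': C' → B' is weak-* closed in B'. -/

import Mathlib

open Filter Set Topology Pointwise Uniformity


section Aux
variable {E : Type*} [AddCommGroup E] [TopologicalSpace E] [IsTopologicalAddGroup E]

lemma aux_closure_sub_subset (s t : Set E) :
    closure s - closure t ⊆ closure (s - t) := by
  rintro x ⟨a, ha, b, hb, rfl⟩
  have h : (a, b) ∈ closure (s ×ˢ t) := by
    rw [closure_prod_eq]; exact ⟨ha, hb⟩
  have hc : Continuous fun p : E × E => p.1 - p.2 := continuous_fst.sub continuous_snd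
  have h2 := image_closure_subset_closure_image (s := s ×ˢ t) hc (mem_image_of_mem _ h)
  rw [Set.image_prod] at h2
  simpa [Set.image2_sub] using h2

lemma aux_closure_subset_add {A V : Set E} (hV : V ∈ 𝓝 (0 : E)) :
    closure A ⊆ A + V := by
  intro x hx
  have hN : (fun a : E => x - a) ⁻¹' V ∈ 𝓝 x := by
    apply ContinuousAt.preimage_mem_nhds (by fun_prop)
    simpa using hV
  obtain ⟨a, haN, haA⟩ := mem_closure_iff_nhds.mp hx _ hN
  refine ⟨a, haA, x - a, haN, ?_⟩
  show a + (x - a) = x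
  rw [add_comm]
  exact sub_add_cancel x a

lemma aux_two_limits {f : ℕ → E} {p q : E} (hp : Tendsto f atTop (𝓝 p))
    (hq : Tendsto f atTop (𝓝 q)) : p - q ∈ closure ({0} : Set E) := by
  have h0 : Tendsto (fun _ : ℕ => (0 : E)) atTop (𝓝 (p - q)) := by
    simpa using hp.sub hq
  rw [mem_closure_iff_nhds]
  intro N hN
  have : ∀ᶠ _n : ℕ in atTop, (0 : E) ∈ N := h0.eventually_mem hN
  obtain ⟨n, hn⟩ := this.exists
  exact ⟨0, hn, rfl⟩

end Aux

section Step1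
variable {B C : Type*}
  [AddCommGroup B] [Module ℂ B] [TopologicalSpace B] [IsTopologicalAddGroup B] [ContinuousSMul ℂ B]
  [AddCommGroup C] [Module ℂ C] [UniformSpace C] [IsUniformAddGroup C] [ContinuousSMul ℂ C]
  [CompleteSpace C] [FirstCountableTopology C]

lemma aux_step1 (v : B →L[ℂ] C) (hclosed : IsClosed (Set.range v))
    {U : Set B} (hU : U ∈ 𝓝 (0 : B)) :
    ∃ W ∈ 𝓝 (0 : C), W ∩ Set.range v ⊆ closure (v '' U) := by
  classical
  -- shrink U
  obtain ⟨U₂, hU₂n, hU₂⟩ := exists_nhds_zero_half hU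
  set U₁ : Set B := balancedCore ℂ U₂ with hU₁def
  have hU₁n : U₁ ∈ 𝓝 (0 : B) := balancedCore_mem_nhds_zero hU₂n
  have hU₁bal : Balanced ℂ U₁ := balancedCore_balanced _
  have hU₁sub : U₁ ⊆ U₂ := balancedCore_subset _
  -- the range as a Baire space
  set R : Set C := Set.range v with hRdef
  haveI : CompleteSpace R := hclosed.completeSpace_coe
  haveI : (𝓤 C).IsCountablyGenerated := IsUniformAddGroup.uniformity_countably_generated
  haveI : (𝓤 R).IsCountablyGenerated := by
    rw [uniformity_setCoe]
    exact Filter.comap.isCountablyGenerated _ _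
  haveI : Nonempty R := ⟨⟨v 0, mem_range_self 0⟩⟩
  -- countable cover by closures
  set F : ℕ → Set R := fun n =>
    ((↑) : R → C) ⁻¹' closure (v '' ((((n : ℂ) + 1)) • U₁)) with hFdef
  have hFclosed : ∀ n, IsClosed (F n) := fun n =>
    (isClosed_closure).preimage continuous_subtype_val
  have hFcover : ⋃ n, F n = univ := by
    rw [eq_univ_iff_forall]
    rintro ⟨c, b, rfl⟩
    -- find n with b ∈ (n+1) • U₁
    have htend : Tendsto (fun n : ℕ => (((n : ℂ) + 1))⁻¹ • b) atTop (𝓝 (0 : B)) := by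
      have h1 : Tendsto (fun n : ℕ => (((n : ℂ) + 1))⁻¹) atTop (𝓝 (0 : ℂ)) := by
        rw [tendsto_zero_iff_norm_tendsto_zero]
        have : ∀ n : ℕ, ‖(((n : ℂ) + 1))⁻¹‖ = 1 / ((n : ℝ) + 1) := by
          intro n
          rw [norm_inv]
          rw [show ((n : ℂ) + 1) = ((n + 1 : ℕ) : ℂ) by push_cast; ring]
          rw [Complex.norm_natCast]
          push_cast; ring
        simp only [this]
        exact tendsto_one_div_add_atTop_nhds_zero_nat
      simpa using h1.smul (tendsto_const_nhds : Tendsto (fun _ : ℕ => b) atTop (𝓝 b))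
    obtain ⟨n, hn⟩ := (htend.eventually_mem hU₁n).exists
    have hne : ((n : ℂ) + 1) ≠ 0 := Nat.cast_add_one_ne_zero n
    refine mem_iUnion.mpr ⟨n, ?_⟩
    show v b ∈ closure (v '' ((((n : ℂ) + 1)) • U₁))
    refine subset_closure ⟨b, ?_, rfl⟩
    rwa [mem_smul_set_iff_inv_smul_mem₀ hne]
  -- Baire
  obtain ⟨n, y₀, hy₀⟩ := nonempty_interior_of_iUnion_of_closed hFclosed hFcover
  set a : ℂ := (n : ℂ) + 1 with hadef
  have ha : a ≠ 0 := Nat.cast_add_one_ne_zero n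
  -- rewrite the closure
  have himg : v '' (a • U₁) = a • (v '' U₁) := image_smul_set v.toLinearMap a U₁
  have hclos : closure (v '' (a • U₁)) = a • closure (v '' U₁) := by
    rw [himg, closure_smul₀' ha]
  -- extract an open set in C
  obtain ⟨O, hOopen, hOeq⟩ := isOpen_induced_iff.mp (isOpen_interior (s := F n))
  have hy₀O : (y₀ : C) ∈ O := by
    have : y₀ ∈ ((↑) : R → C) ⁻¹' O := hOeq.symm ▸ hy₀
    exact this
  have hOsub : ∀ c ∈ O, c ∈ R → c ∈ a • closure (v '' U₁) := by
    intro c hcO hcR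
    have : (⟨c, hcR⟩ : R) ∈ ((↑) : R → C) ⁻¹' O := hcO
    rw [hOeq] at this
    have h2 : (⟨c, hcR⟩ : R) ∈ F n := interior_subset this
    rw [hFdef] at h2
    have h3 : c ∈ closure (v '' (a • U₁)) := h2
    rwa [hclos] at h3
  -- rescale
  set O' : Set C := a⁻¹ • O with hO'def
  have hO'open : IsOpen O' := hOopen.smul₀ (inv_ne_zero ha)
  have hy₀R : (y₀ : C) ∈ R := y₀.2
  set c₁ : C := a⁻¹ • (y₀ : C) with hc₁def
  have hc₁O' : c₁ ∈ O' := smul_mem_smul_set hy₀O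
  have hRsmul : ∀ (r : ℂ) (c : C), c ∈ R → r • c ∈ R := by
    rintro r c ⟨b, rfl⟩
    exact ⟨r • b, map_smul v r b⟩
  have hRadd : ∀ c d : C, c ∈ R → d ∈ R → c + d ∈ R := by
    rintro c d ⟨b, rfl⟩ ⟨b', rfl⟩
    exact ⟨b + b', map_add v b b'⟩
  have hc₁R : c₁ ∈ R := hRsmul _ _ hy₀R
  have hO'sub : ∀ c ∈ O', c ∈ R → c ∈ closure (v '' U₁) := by
    intro c hcO' hcR
    obtain ⟨o, ho, rfl⟩ := hcO'
    have hoR : o ∈ R := by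
      have := hRsmul a _ hcR
      rwa [smul_inv_smul₀ ha] at this
    have := hOsub o ho hoR
    obtain ⟨z, hz, hzo⟩ := this
    rw [← hzo]
    show a⁻¹ • (a • z) ∈ _
    rw [inv_smul_smul₀ ha]
    exact hz
  -- translate
  refine ⟨(fun x => x + c₁) ⁻¹' O', ?_, ?_⟩
  · apply ContinuousAt.preimage_mem_nhds (by fun_prop)
    simpa using hO'open.mem_nhds hc₁O'
  · rintro w ⟨hwO, hwR⟩
    have hwc₁ : w + c₁ ∈ O' := hwO
    have hwc₁R : w + c₁ ∈ R := hRadd _ _ hwR hc₁R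
    have h1 : w + c₁ ∈ closure (v '' U₁) := hO'sub _ hwc₁ hwc₁R
    have h2 : c₁ ∈ closure (v '' U₁) := hO'sub _ hc₁O' hc₁R
    have h3 : w ∈ closure (v '' U₁) - closure (v '' U₁) := ⟨_, h1, _, h2, add_sub_cancel_right w c₁⟩
    have h4 := aux_closure_sub_subset _ _ h3
    refine closure_mono ?_ h4
    rintro x ⟨p, hp, q, hq, rfl⟩
    obtain ⟨bp, hbp, rfl⟩ := hp
    obtain ⟨bq, hbq, rfl⟩ := hq
    refine ⟨bp - bq, ?_, map_sub v bp bq⟩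
    have hneg : -bq ∈ U₁ := by
      have := hU₁bal.smul_mem (a := (-1 : ℂ)) (by norm_num) hbq
      rwa [neg_one_smul] at this
    have := hU₂ bp (hU₁sub hbp) (-bq) (hU₁sub hneg)
    rwa [← sub_eq_add_neg] at this

end Step1
section StepA
variable {B C : Type*}
  [AddCommGroup B] [Module ℂ B] [UniformSpace B] [IsUniformAddGroup B] [ContinuousSMul ℂ B]
  [CompleteSpace B] [FirstCountableTopology B]
  [AddCommGroup C] [Module ℂ C] [UniformSpace C] [IsUniformAddGroup C] [ContinuousSMul ℂ C]
  [CompleteSpace C] [FirstCountableTopology C]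

lemma aux_stepA (v : B →L[ℂ] C) (hclosed : IsClosed (Set.range v))
    {U : Set B} (hU : U ∈ 𝓝 (0 : B)) :
    ∃ W ∈ 𝓝 (0 : C), ∀ c ∈ W, c ∈ Set.range v →
      ∃ b ∈ U, c - v b ∈ closure ({0} : Set C) := by
  classical
  set R : Set C := Set.range v with hRdef
  have hRsub : ∀ c d : C, c ∈ R → d ∈ R → c - d ∈ R := by
    rintro c d ⟨b, rfl⟩ ⟨b', rfl⟩
    exact ⟨b - b', map_sub v b b'⟩
  -- bases
  obtain ⟨VB, hVB⟩ := (𝓝 (0 : B)).exists_antitone_basis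
  obtain ⟨VC, hVC⟩ := (𝓝 (0 : C)).exists_antitone_basis
  -- initial triple-shrunk balanced neighborhood
  obtain ⟨U₂, hU₂n, hU₂⟩ := exists_nhds_zero_half hU
  obtain ⟨U₃, hU₃n, hU₃⟩ := exists_nhds_zero_half hU₂n
  set U₁ : Set B := balancedCore ℂ U₃ with hU₁def
  have hU₁n : U₁ ∈ 𝓝 (0 : B) := balancedCore_mem_nhds_zero hU₃n
  have hU₁bal : Balanced ℂ U₁ := balancedCore_balanced _
  have hU₁sub : U₁ ⊆ U₃ := balancedCore_subset _
  have hU₃sub : U₃ ⊆ U₂ := fun x hx => by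
    have := hU₃ x hx 0 (mem_of_mem_nhds hU₃n); simpa using this
  have htriple : U₁ + U₁ + U₁ ⊆ U := by
    rintro x ⟨y, ⟨p, hp, q, hq, rfl⟩, r, hr, rfl⟩
    exact hU₂ (p + q) (hU₃ p (hU₁sub hp) q (hU₁sub hq)) r (hU₃sub (hU₁sub hr))
  -- recursive sequence of balanced neighborhoods
  have key : ∀ (n : ℕ) (s : Set B), s ∈ 𝓝 (0 : B) →
      ∃ t : Set B, (t ∈ 𝓝 (0 : B) ∧ Balanced ℂ t) ∧ t + t ⊆ s ∩ VB n := by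
    intro n s hs
    obtain ⟨h, hhn, hh⟩ := exists_nhds_zero_half (inter_mem hs (hVB.mem n))
    refine ⟨balancedCore ℂ h, ⟨balancedCore_mem_nhds_zero hhn, balancedCore_balanced _⟩, ?_⟩
    rintro x ⟨p, hp, q, hq, rfl⟩
    exact hh p (balancedCore_subset _ hp) q (balancedCore_subset _ hq)
  choose! T hT1 hT2 using key
  set D : ℕ → Set B := fun n => Nat.rec U₁ (fun k s => T k s) n with hDdef
  have hD0 : D 0 = U₁ := rfl
  have hDsucc : ∀ n, D (n + 1) = T n (D n) := fun n => rfl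
  have hDmem : ∀ n, D n ∈ 𝓝 (0 : B) ∧ Balanced ℂ (D n) := by
    intro n
    induction n with
    | zero => exact ⟨hU₁n, hU₁bal⟩
    | succ n ih => rw [hDsucc]; exact hT1 n (D n) ih.1
  have hDstep : ∀ n, D (n + 1) + D (n + 1) ⊆ D n ∩ VB n := by
    intro n
    rw [hDsucc]
    exact hT2 n (D n) (hDmem n).1
  have hDzero : ∀ n, (0 : B) ∈ D n := fun n => mem_of_mem_nhds (hDmem n).1
  have hDmono1 : ∀ n, D (n + 1) ⊆ D n := by
    intro n x hx
    exact ((hDstep n) ⟨x, hx, 0, hDzero (n + 1), add_zero x⟩).1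
  have hDmono : ∀ m n, m ≤ n → D n ⊆ D m := by
    intro m n h
    induction h with
    | refl => exact subset_rfl
    | step h ih => exact fun x hx => ih (hDmono1 _ hx)
  -- step1 neighborhoods
  have hs1 : ∀ n, ∃ W ∈ 𝓝 (0 : C), W ∩ R ⊆ closure (v '' D n) :=
    fun n => aux_step1 v hclosed (hDmem n).1
  choose W hWn hWsub using hs1
  refine ⟨W 0, hWn 0, ?_⟩
  intro c hcW hcR
  -- the ladder
  have hnext : ∀ (n : ℕ) (y : C), y ∈ closure (v '' D n) ∩ R →
      ∃ b : B, b ∈ D n ∧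
        (y - v b ∈ (closure (v '' D (n + 1)) ∩ R) ∩ VC n) := by
    rintro n y ⟨hy, hyR⟩
    have hN : VC n ∩ W (n + 1) ∈ 𝓝 (0 : C) := inter_mem (hVC.mem n) (hWn (n + 1))
    have hyN : (fun x : C => y - x) ⁻¹' (VC n ∩ W (n + 1)) ∈ 𝓝 y := by
      apply ContinuousAt.preimage_mem_nhds (by fun_prop)
      simpa using hN
    obtain ⟨x, hxN, hxD⟩ := mem_closure_iff_nhds.mp hy _ hyN
    obtain ⟨b, hbD, rfl⟩ := hxD
    refine ⟨b, hbD, ⟨?_, hxN.1⟩⟩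
    have hyvR : y - v b ∈ R := hRsub _ _ hyR ⟨b, rfl⟩
    exact ⟨hWsub (n + 1) ⟨hxN.2, hyvR⟩, hyvR⟩
  choose! nb hnb1 hnb2 using hnext
  set y : ℕ → C := fun n => Nat.rec c (fun k yk => yk - v (nb k yk)) n with hydef
  have hy0 : y 0 = c := rfl
  have hysucc : ∀ n, y (n + 1) = y n - v (nb n (y n)) := fun n => rfl
  set b : ℕ → B := fun n => nb n (y n) with hbdef
  have hyinv : ∀ n, y n ∈ closure (v '' D n) ∩ R := by
    intro n
    induction n with
    | zero => exact ⟨hWsub 0 ⟨hcW, hcR⟩, hcR⟩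
    | succ n ih =>
      have := hnb2 n (y n) ih
      rw [← hysucc] at this
      exact this.1
  have hbD : ∀ n, b n ∈ D n := fun n => hnb1 n (y n) (hyinv n)
  have hyVC : ∀ n, y (n + 1) ∈ VC n := by
    intro n
    have := hnb2 n (y n) (hyinv n)
    rw [← hysucc] at this
    exact this.2
  -- partial sums
  set S : ℕ → B := fun n => ∑ k ∈ Finset.range n, b k with hSdef
  have hQ : ∀ j n, S (n + j) - S n ∈ D n + D n := by
    intro j
    induction j with
    | zero =>
      intro n
      refine ⟨0, hDzero n, 0, hDzero n, ?_⟩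
      simp
    | succ j ih =>
      intro n
      have hsplit : S (n + (j + 1)) - S n = b n + (S ((n + 1) + j) - S (n + 1)) := by
        have h1 : S (n + (j + 1)) - S n = ∑ k ∈ Finset.Ico n ((n + 1) + j), b k := by
          rw [hSdef, show n + (j + 1) = (n + 1) + j by omega]
          rw [Finset.sum_Ico_eq_sub _ (by omega)]
        have h2 : S ((n + 1) + j) - S (n + 1) = ∑ k ∈ Finset.Ico (n + 1) ((n + 1) + j), b k := by
          rw [hSdef]
          rw [Finset.sum_Ico_eq_sub _ (by omega)]
        rw [h1, h2, Finset.sum_eq_sum_Ico_succ_bot (by omega)]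
      rw [hsplit]
      have h3 := ih (n + 1)
      have h4 : S ((n + 1) + j) - S (n + 1) ∈ D n := ((hDstep n) h3).1
      exact ⟨b n, hbD n, _, h4, rfl⟩
  -- Cauchy
  have hbasis : (𝓤 B).HasBasis (fun V : Set B => V ∈ 𝓝 (0 : B))
      (fun V => {p : B × B | p.2 - p.1 ∈ V}) := by
    rw [uniformity_eq_comap_nhds_zero B]
    exact (𝓝 (0 : B)).basis_sets.comap _
  have hcauchy : CauchySeq S := by
    rw [hbasis.cauchySeq_iff]
    intro V hV
    have hnegV : -V ∈ 𝓝 (0 : B) := by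
      have h : Tendsto (fun x : B => -x) (𝓝 0) (𝓝 (0 : B)) := by
        simpa using continuous_neg.tendsto (0 : B)
      exact h hV
    obtain ⟨n, hn⟩ := hVB.mem_iff.mp (inter_mem hV hnegV)
    refine ⟨n + 1, fun m₁ hm₁ m₂ hm₂ => ?_⟩
    have hsym : ∀ p q : ℕ, n + 1 ≤ p → p ≤ q → S q - S p ∈ V ∩ (-V) := by
      intro p q hp hpq
      obtain ⟨j, rfl⟩ := Nat.exists_eq_add_of_le hpq
      have := hQ j p
      have h5 : S (p + j) - S p ∈ D (n + 1) + D (n + 1) := by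
        obtain ⟨x1, hx1, x2, hx2, heq⟩ := this
        exact ⟨x1, hDmono _ _ hp hx1, x2, hDmono _ _ hp hx2, heq⟩
      exact hn (((hDstep n) h5).2)
    show S m₂ - S m₁ ∈ V
    rcases le_total m₁ m₂ with h | h
    · exact (hsym m₁ m₂ hm₁ h).1
    · have h6 := (hsym m₂ m₁ hm₂ h).2
      have h7 : S m₂ - S m₁ = -(S m₁ - S m₂) := by abel
      rw [h7]
      exact Set.mem_neg.mp h6
  -- limit of the partial sums
  obtain ⟨bB, hbB⟩ := cauchySeq_tendsto_of_complete hcauchy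
  have hbU : bB ∈ U := by
    have hSj : ∀ j, S j ∈ U₁ + U₁ := by
      intro j
      have := hQ j 0
      rw [Nat.zero_add] at this
      simpa [hSdef, hD0] using this
    have hcl : bB ∈ closure (U₁ + U₁) :=
      mem_closure_of_tendsto hbB (Eventually.of_forall hSj)
    have := aux_closure_subset_add (A := U₁ + U₁) hU₁n hcl
    exact htriple this
  -- v of partial sums converges to c
  have hvS : ∀ n, v (S n) = c - y n := by
    intro n
    induction n with
    | zero => simp [hSdef, hy0]
    | succ n ih =>
      have h1 : S (n + 1) = S n + b n := by
        rw [hSdef]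
        exact Finset.sum_range_succ b n
      rw [h1, map_add, ih, hysucc]
      abel
  have hyto : Tendsto (fun n => y (n + 1)) atTop (𝓝 (0 : C)) :=
    hVC.tendsto hyVC
  have hyto' : Tendsto y atTop (𝓝 (0 : C)) := by
    rw [show y = fun n => y n from rfl]
    exact (tendsto_add_atTop_iff_nat 1).mp hyto
  have hvS1 : Tendsto (fun n => v (S n)) atTop (𝓝 c) := by
    simp only [hvS]
    simpa using tendsto_const_nhds.sub hyto'
  have hvS2 : Tendsto (fun n => v (S n)) atTop (𝓝 (v bB)) :=
    (v.continuous.tendsto bB).comp hbB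
  exact ⟨bB, hbU, aux_two_limits hvS1 hvS2⟩

end StepA

/-- If `v : B → C` (part of a complex `A →u B →v C` of Fréchet spaces) has closed image
in `C`, then the image of its transpose `v' : C' → B'` is weak-* closed in `B'`. -/
theorem transpose_image_weakstar_closed
    {A B C : Type*}
    [AddCommGroup A] [Module ℂ A] [Module ℝ A] [IsScalarTower ℝ ℂ A]
    [UniformSpace A] [IsUniformAddGroup A] [ContinuousSMul ℂ A] [ContinuousSMul ℝ A]
    [CompleteSpace A] [FirstCountableTopology A] [LocallyConvexSpace ℝ A]
    [AddCommGroup B] [Module ℂ B] [Module ℝ B] [IsScalarTower ℝ ℂ B]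
    [UniformSpace B] [IsUniformAddGroup B] [ContinuousSMul ℂ B] [ContinuousSMul ℝ B]
    [CompleteSpace B] [FirstCountableTopology B] [LocallyConvexSpace ℝ B]
    [AddCommGroup C] [Module ℂ C] [Module ℝ C] [IsScalarTower ℝ ℂ C]
    [UniformSpace C] [IsUniformAddGroup C] [ContinuousSMul ℂ C] [ContinuousSMul ℝ C]
    [CompleteSpace C] [FirstCountableTopology C] [LocallyConvexSpace ℝ C]
    (u : A →L[ℂ] B) (v : B →L[ℂ] C) (huv : ∀ a : A, v (u a) = 0)
    (hclosed : IsClosed (Set.range v)) :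
    IsClosed {lam : WeakDual ℂ B | ∃ γ : C →L[ℂ] ℂ, ∀ b : B, lam b = γ (v b)} := by
  classical
  have hset : {lam : WeakDual ℂ B | ∃ γ : C →L[ℂ] ℂ, ∀ b : B, lam b = γ (v b)} =
      {lam : WeakDual ℂ B | ∀ b : B, v b ∈ closure ({0} : Set C) → lam b = 0} := by
    apply Set.eq_of_subset_of_subset
    · rintro lam ⟨γ, hγ⟩ b hb
      rw [hγ b]
      have h1 : γ (v b) ∈ closure (γ '' ({0} : Set C)) :=
        image_closure_subset_closure_image γ.continuous (mem_image_of_mem γ hb)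
      simpa using h1
    · intro lam hlam
      -- `lam` as a continuous linear functional on `B`
      set lam' : B →L[ℂ] ℂ := lam with hlam'def
      have hlam'app : ∀ b : B, lam b = lam' b := fun b => rfl
      have hker : ∀ b : B, v b ∈ closure ({0} : Set C) → lam' b = 0 := fun b hb =>
        (hlam'app b).symm.trans (hlam b hb) |>.symm ▸ hlam b hb
      have heq : ∀ b b' : B, v b - v b' ∈ closure ({0} : Set C) → lam' b = lam' b' := by
        intro b b' h
        have h2 : v (b - b') ∈ closure ({0} : Set C) := by rwa [map_sub]
        have := hker _ h2
        rw [map_sub, sub_eq_zero] at this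
        exact this
      -- the open-mapping neighborhood
      have hUn : lam' ⁻¹' Metric.ball (0 : ℂ) 1 ∈ 𝓝 (0 : B) := by
        apply ContinuousAt.preimage_mem_nhds lam'.continuous.continuousAt
        rw [map_zero]
        exact Metric.ball_mem_nhds 0 one_pos
      obtain ⟨W, hWn, hW⟩ := aux_stepA v hclosed hUn
      -- a convex balanced sub-neighborhood
      obtain ⟨W'', ⟨hW''n, hW''conv⟩, hW''sub⟩ :=
        (LocallyConvexSpace.convex_basis_zero ℝ C).mem_iff.mp hWn
      set W' : Set C := balancedCore ℂ W'' with hW'def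
      have hW'n : W' ∈ 𝓝 (0 : C) := balancedCore_mem_nhds_zero hW''n
      have hW'bal : Balanced ℂ W' := balancedCore_balanced _
      have hW'sub : W' ⊆ W := fun x hx => hW''sub (balancedCore_subset _ hx)
      have hW'conv : Convex ℝ W' := by
        rw [hW'def, balancedCore_eq_iInter (mem_of_mem_nhds hW''n)]
        refine convex_iInter fun r => convex_iInter fun _ => ?_
        have : r • W'' = (fun x : C => r • x) '' W'' := (Set.image_smul).symm
        rw [this]
        exact hW''conv.is_linear_image ⟨fun x y => smul_add r x y,
          fun c x => smul_comm r c x⟩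
      have hW'abs : Absorbent ℝ W' := absorbent_nhds_zero hW'n
      -- the range, as a real submodule
      set Rsub : Submodule ℝ C :=
        Submodule.restrictScalars ℝ (LinearMap.range (v : B →ₗ[ℂ] C)) with hRsubdef
      have hmemR : ∀ c : C, c ∈ Rsub ↔ c ∈ Set.range v := by
        intro c
        rw [hRsubdef, Submodule.restrictScalars_mem, LinearMap.mem_range]
        rfl
      -- choice of preimages
      set φ : C → B := fun c => if h : ∃ b : B, v b = c then h.choose else 0 with hφdef
      have hφv : ∀ c : C, c ∈ Set.range v → v (φ c) = c := by
        rintro c ⟨b, rfl⟩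
        have h : ∃ b' : B, v b' = v b := ⟨b, rfl⟩
        simp only [hφdef, dif_pos h]
        exact h.choose_spec
      -- the real-linear functional on the range
      have hsmulC : ∀ (r : ℝ) (x : C), r • x = (r : ℂ) • x := fun r x =>
        (algebraMap_smul ℂ r x).symm
      have hsmulB : ∀ (r : ℝ) (x : B), r • x = (r : ℂ) • x := fun r x =>
        (algebraMap_smul ℂ r x).symm
      set flin : Rsub →ₗ[ℝ] ℝ :=
        { toFun := fun c => (lam' (φ (c : C))).re
          map_add' := by
            intro c d
            show (lam' (φ ((c + d : Rsub) : C))).re =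
              (lam' (φ ((c : Rsub) : C))).re + (lam' (φ ((d : Rsub) : C))).re
            have hc : (c : C) ∈ Set.range v := (hmemR _).mp c.2
            have hd : (d : C) ∈ Set.range v := (hmemR _).mp d.2
            have hcd : ((c + d : Rsub) : C) ∈ Set.range v := (hmemR _).mp (c + d).2
            have h1 : lam' (φ ((c + d : Rsub) : C)) = lam' (φ (c : C) + φ (d : C)) := by
              apply heq
              rw [map_add, hφv _ hc, hφv _ hd, hφv _ hcd]
              simp only [Submodule.coe_add, sub_self]
              exact subset_closure rfl
            rw [h1, map_add, Complex.add_re]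
          map_smul' := by
            intro r c
            show (lam' (φ ((r • c : Rsub) : C))).re = (RingHom.id ℝ) r • (lam' (φ ((c : Rsub) : C))).re
            have hc : (c : C) ∈ Set.range v := (hmemR _).mp c.2
            have hrc : ((r • c : Rsub) : C) ∈ Set.range v := (hmemR _).mp (r • c).2
            have h1 : lam' (φ ((r • c : Rsub) : C)) = lam' ((r : ℂ) • φ (c : C)) := by
              apply heq
              rw [map_smul, hφv _ hc, hφv _ hrc]
              rw [Submodule.coe_smul, hsmulC]
              simp only [sub_self]
              exact subset_closure rfl
            rw [h1, map_smul, smul_eq_mul, Complex.re_ofReal_mul]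
            rfl } with hflindef
      -- the sublinear bound
      have hflin_le : ∀ x : Rsub, flin x ≤ gauge W' (x : C) := by
        intro x
        by_contra hcon
        push_neg at hcon
        obtain ⟨r, hr0, hrlt, hxr⟩ := exists_lt_of_gauge_lt hW'abs hcon
        have hxR : (x : C) ∈ Set.range v := (hmemR _).mp x.2
        obtain ⟨w, hwW', hxw⟩ := hxr
        have hxw' : (x : C) = r • w := hxw.symm
        have hwR : w ∈ Set.range v := by
          obtain ⟨b, hb⟩ := hxR
          refine ⟨(r : ℂ)⁻¹ • b, ?_⟩
          rw [map_smul, hb, hxw', show r • w = (r : ℂ) • w from hsmulC r w,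
            smul_smul, inv_mul_cancel₀ (by exact_mod_cast hr0.ne'), one_smul]
        obtain ⟨b₀, hb₀U, hb₀cl⟩ := hW w (hW'sub hwW') hwR
        have hkey : lam' (φ (x : C)) = (r : ℂ) * lam' b₀ := by
          have h1 : lam' (φ (x : C)) = lam' ((r : ℂ) • b₀) := by
            apply heq
            rw [map_smul, hφv _ hxR, hxw']
            rw [show (r • w : C) - (r : ℂ) • v b₀ = (r : ℂ) • (w - v b₀) by
              rw [smul_sub, hsmulC]]
            have h2 := image_closure_subset_closure_image
              (continuous_const_smul ((r : ℂ))) (mem_image_of_mem _ hb₀cl)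
            rw [Set.image_singleton, smul_zero] at h2
            exact h2
          rw [h1, map_smul, smul_eq_mul]
        have hflinx : flin x = r * (lam' b₀).re := by
          show (lam' (φ (x : C))).re = r * (lam' b₀).re
          rw [hkey, Complex.re_ofReal_mul]
        have hb₀lt : ‖lam' b₀‖ < 1 := by simpa using hb₀U
        have : flin x < r := by
          rw [hflinx]
          calc r * (lam' b₀).re ≤ r * ‖lam' b₀‖ := by
                apply mul_le_mul_of_nonneg_left _ hr0.le
                exact (Complex.re_le_norm _).trans_eq rfl
            _ < r * 1 := by exact mul_lt_mul_of_pos_left hb₀lt hr0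
            _ = r := mul_one r
        linarith
      -- Hahn-Banach extension
      obtain ⟨g, hg_eq, hg_le⟩ := exists_extension_of_le_sublinear ⟨Rsub, flin⟩ (gauge W')
        (fun c hc x => by rw [gauge_smul_of_nonneg hc.le]; rfl)
        (gauge_add_le hW'conv hW'abs)
        hflin_le
      -- complexify
      set γₗ : C →ₗ[ℂ] ℂ := g.extendTo𝕜' with hγₗdef
      have hγₗ_apply : ∀ x : C, γₗ x = (g x : ℂ) - Complex.I * (g ((Complex.I : ℂ) • x) : ℂ) :=
        fun x => rfl
      -- norm bound
      have hγₗ_bound : ∀ x : C, ‖γₗ x‖ ≤ gauge W' x := by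
        intro x
        by_cases h0 : γₗ x = 0
        · rw [h0, norm_zero]; exact gauge_nonneg x
        · have hsq := g.norm_extendTo𝕜'_apply_sq (𝕜 := ℂ) x
          have h1 : g ((starRingEnd ℂ) (γₗ x) • x) ≤ gauge W' ((starRingEnd ℂ) (γₗ x) • x) :=
            hg_le _
          have h2 : gauge W' ((starRingEnd ℂ) (γₗ x) • x) = ‖γₗ x‖ * gauge W' x := by
            rw [gauge_smul hW'bal]
            congr 1
            exact RCLike.norm_conj _
          have h3 : ‖γₗ x‖ ^ 2 ≤ ‖γₗ x‖ * gauge W' x := by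
            rw [show ‖γₗ x‖ ^ 2 = g ((starRingEnd ℂ) (γₗ x) • x) from hsq]; rw [← h2]; exact h1
          have h4 : (0 : ℝ) < ‖γₗ x‖ := norm_pos_iff.mpr h0
          nlinarith
      -- continuity
      have hγₗ_cont : Continuous γₗ := by
        apply continuous_of_continuousAt_zero γₗ.toAddMonoidHom
        show ContinuousAt γₗ 0
        rw [ContinuousAt, map_zero]
        rw [tendsto_zero_iff_norm_tendsto_zero]
        apply squeeze_zero (fun x => norm_nonneg _) hγₗ_bound
        exact tendsto_gauge_nhds_zero hW'n
      refine ⟨⟨γₗ, hγₗ_cont⟩, ?_⟩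
      intro b
      have hvb : v b ∈ Rsub := (hmemR _).mpr ⟨b, rfl⟩
      have hIvb : (Complex.I : ℂ) • v b ∈ Rsub := (hmemR _).mpr ⟨Complex.I • b, by
        rw [map_smul]⟩
      have hg1 : g (v b) = (lam' b).re := by
        have := hg_eq ⟨v b, hvb⟩
        have h2 : flin ⟨v b, hvb⟩ = (lam' b).re := by
          show (lam' (φ (v b))).re = (lam' b).re
          congr 1
          apply heq
          rw [hφv _ ⟨b, rfl⟩, sub_self]
          exact subset_closure rfl
        rw [← h2]
        exact this
      have hg2 : g ((Complex.I : ℂ) • v b) = -(lam' b).im := by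
        have := hg_eq ⟨(Complex.I : ℂ) • v b, hIvb⟩
        have h2 : flin ⟨(Complex.I : ℂ) • v b, hIvb⟩ = -(lam' b).im := by
          show (lam' (φ ((Complex.I : ℂ) • v b))).re = -(lam' b).im
          have h3 : lam' (φ ((Complex.I : ℂ) • v b)) = lam' (Complex.I • b) := by
            apply heq
            rw [hφv _ ⟨Complex.I • b, by rw [map_smul]⟩, map_smul, sub_self]
            exact subset_closure rfl
          rw [h3, map_smul, smul_eq_mul, Complex.mul_re]
          simp
        rw [← h2]
        exact this
      show lam b = γₗ (v b)
      rw [hlam'app b, hγₗ_apply, hg1, hg2]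
      apply Complex.ext <;> simp
  rw [hset]
  have : {lam : WeakDual ℂ B | ∀ b : B, v b ∈ closure ({0} : Set C) → lam b = 0} =
      ⋂ (b : B) (_ : v b ∈ closure ({0} : Set C)), {lam : WeakDual ℂ B | lam b = 0} := by
    ext lam
    simp only [Set.mem_setOf_eq, Set.mem_iInter]
  rw [this]
  refine isClosed_iInter fun b => isClosed_iInter fun _ => ?_
  exact isClosed_eq (WeakDual.eval_continuous b) continuous_const
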